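/- Under the hypotheses of the previous barrier estimates and additionally u'(x)² ≥ h²(x + x³/6)², one has u(x) ≤ h − h·(x²/2 + (1/12)(1/2 + h²)x⁴ + (h²/36)x⁶ + (h²/288)x⁸ + (h²/6480)x¹⁰) for x in the domain. -/

import Mathlib

/-- derivative of the degree-10 barrier polynomial -/
lemma barrier_poly_deriv (h x : ℝ) :
    HasDerivAt (fun y : ℝ => h - h * (y ^ 2 / 2 + 1 / 12 * (1 / 2 + h ^ 2) * y ^ 4
        + h ^ 2 / 36 * y ^ 6 + h ^ 2 / 288 * y ^ 8 + h ^ 2 / 6480 * y ^ 10))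
      (-(h*x) - h*(1/2+h^2)/3*x^3 - h^3/6*x^5 - h^3/36*x^7 - h^3/648*x^9) x := by
  have hf : (fun y : ℝ => h - h * (y ^ 2 / 2 + 1 / 12 * (1 / 2 + h ^ 2) * y ^ 4
        + h ^ 2 / 36 * y ^ 6 + h ^ 2 / 288 * y ^ 8 + h ^ 2 / 6480 * y ^ 10))
      = (fun y : ℝ => h + (-(h/2))*y^2 + (-(h*(1/2+h^2)/12))*y^4 + (-(h^3/36))*y^6
        + (-(h^3/288))*y^8 + (-(h^3/6480))*y^10) := by funext y; ring
  rw [hf]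
  have H := (((((hasDerivAt_const x h).add ((hasDerivAt_pow 2 x).const_mul (-(h/2)))).add
      ((hasDerivAt_pow 4 x).const_mul (-(h*(1/2+h^2)/12)))).add
      ((hasDerivAt_pow 6 x).const_mul (-(h^3/36)))).add
      ((hasDerivAt_pow 8 x).const_mul (-(h^3/288)))).add
      ((hasDerivAt_pow 10 x).const_mul (-(h^3/6480)))
  refine H.congr_deriv ?_
  push_cast; ring

/-- derivative of the degree-9 polynomial (first integral of the second-derivative bound) -/
lemma barrier_poly_deriv' (h x : ℝ) :
    HasDerivAt (fun y : ℝ => -(h*y) - h*(1/2+h^2)/3*y^3 - h^3/6*y^5 - h^3/36*y^7 - h^3/648*y^9)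
      (-h - h*(1/2+h^2)*x^2 - 5/6*h^3*x^4 - 7/36*h^3*x^6 - 1/72*h^3*x^8) x := by
  have hf : (fun y : ℝ => -(h*y) - h*(1/2+h^2)/3*y^3 - h^3/6*y^5 - h^3/36*y^7 - h^3/648*y^9)
      = (fun y : ℝ => (0:ℝ) + (-h)*y^1 + (-(h*(1/2+h^2)/3))*y^3 + (-(h^3/6))*y^5
        + (-(h^3/36))*y^7 + (-(h^3/648))*y^9) := by funext y; ring
  rw [hf]
  have H := (((((hasDerivAt_const x (0:ℝ)).add ((hasDerivAt_pow 1 x).const_mul (-h))).add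
      ((hasDerivAt_pow 3 x).const_mul (-(h*(1/2+h^2)/3)))).add
      ((hasDerivAt_pow 5 x).const_mul (-(h^3/6)))).add
      ((hasDerivAt_pow 7 x).const_mul (-(h^3/36)))).add
      ((hasDerivAt_pow 9 x).const_mul (-(h^3/648)))
  refine H.congr_deriv ?_
  push_cast; ring

/-- Refined barrier estimate: with additionally `(u')² ≥ h²(x + x³/6)²` and
`x u' - u ≤ -h(1 + x²/2)`, one gets the degree-ten upper barrier for `u`. -/
theorem refined_barrier_estimate (u : ℝ → ℝ) (x₀ h : ℝ) (hx₀ : 0 < x₀) (hh : 0 < h)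
    (hC2 : ContDiffOn ℝ 2 u (Set.Icc 0 x₀))
    (hu0 : u 0 = h) (hu'0 : deriv u 0 = 0)
    (hode : ∀ x ∈ Set.Icc 0 x₀,
      deriv (deriv u) x = (1 + (deriv u x) ^ 2) * (x * deriv u x - u x))
    (hconc : ∀ x ∈ Set.Ioc 0 x₀, deriv (deriv u) x < 0)
    (hfu : ∀ x ∈ Set.Icc 0 x₀, x * deriv u x - u x ≤ -(h * (1 + x ^ 2 / 2)))
    (hsq : ∀ x ∈ Set.Icc 0 x₀,
      h ^ 2 * (x + x ^ 3 / 6) ^ 2 ≤ (deriv u x) ^ 2) :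
    ∀ x ∈ Set.Icc 0 x₀,
      u x ≤ h - h * (x ^ 2 / 2 + 1 / 12 * (1 / 2 + h ^ 2) * x ^ 4
        + h ^ 2 / 36 * x ^ 6 + h ^ 2 / 288 * x ^ 8 + h ^ 2 / 6480 * x ^ 10) := by
  have hint : interior (Set.Icc (0:ℝ) x₀) = Set.Ioo 0 x₀ := interior_Icc
  -- deriv u is differentiable at every point of Icc (otherwise hode gives 0 = negative)
  have hdd : ∀ x ∈ Set.Icc 0 x₀, DifferentiableAt ℝ (deriv u) x := by
    intro x hx
    by_contra hcon
    have h0 : deriv (deriv u) x = 0 := deriv_zero_of_not_differentiableAt hcon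
    have h1 := hode x hx
    have h2 := hfu x hx
    have hx0 : (0:ℝ) ≤ x := hx.1
    nlinarith [sq_nonneg (deriv u x), sq_nonneg x, mul_pos hh (by nlinarith : (0:ℝ) < 1 + x^2/2)]
  -- Step 1 : deriv u x ≤ Q x on Icc, where Q is the odd polynomial
  have key : ∀ x ∈ Set.Icc 0 x₀,
      deriv u x ≤ -(h*x) - h*(1/2+h^2)/3*x^3 - h^3/6*x^5 - h^3/36*x^7 - h^3/648*x^9 := by
    set w : ℝ → ℝ := fun y => deriv u y -
      (-(h*y) - h*(1/2+h^2)/3*y^3 - h^3/6*y^5 - h^3/36*y^7 - h^3/648*y^9) with hw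
    have hwD : ∀ y ∈ Set.Icc 0 x₀, HasDerivAt w
        (deriv (deriv u) y - (-h - h*(1/2+h^2)*y^2 - 5/6*h^3*y^4 - 7/36*h^3*y^6 - 1/72*h^3*y^8)) y :=
      fun y hy => ((hdd y hy).hasDerivAt).sub (barrier_poly_deriv' h y)
    have hcont : ContinuousOn w (Set.Icc 0 x₀) := fun y hy =>
      ((hwD y hy).differentiableAt.continuousAt).continuousWithinAt
    have hdiff : DifferentiableOn ℝ w (interior (Set.Icc 0 x₀)) := by
      rw [hint]
      exact fun y hy => ((hwD y ⟨le_of_lt hy.1, le_of_lt hy.2⟩).differentiableAt).differentiableWithinAt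
    have hder : ∀ y ∈ interior (Set.Icc 0 x₀), deriv w y ≤ 0 := by
      rw [hint]
      intro y hy
      have hyI : y ∈ Set.Icc 0 x₀ := ⟨le_of_lt hy.1, le_of_lt hy.2⟩
      rw [(hwD y hyI).deriv]
      have h1 := hode y hyI
      have h2 := hfu y hyI
      have h3 := hsq y hyI
      have hy0 : (0:ℝ) ≤ y := le_of_lt hy.1
      have hM : (0:ℝ) < h * (1 + y^2/2) := by positivity
      have e1 : (1 + (deriv u y)^2) * (y * deriv u y - u y)
          ≤ (1 + (deriv u y)^2) * (-(h * (1 + y^2/2))) :=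
        mul_le_mul_of_nonneg_left h2 (by positivity)
      have e2 : (1 + (deriv u y)^2) * (-(h * (1 + y^2/2)))
          ≤ (1 + h^2*(y + y^3/6)^2) * (-(h * (1 + y^2/2))) := by nlinarith
      rw [h1]
      nlinarith [e1, e2]
    have hanti := antitoneOn_of_deriv_nonpos (convex_Icc 0 x₀) hcont hdiff hder
    intro x hx
    have h0I : (0:ℝ) ∈ Set.Icc (0:ℝ) x₀ := ⟨le_refl 0, le_of_lt hx₀⟩
    have := hanti h0I hx hx.1
    have hw0 : w 0 = 0 := by simp [hw, hu'0]
    rw [hw0] at this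
    simp only [hw] at this
    linarith
  -- Step 2 : integrate once more
  have huc : ContinuousOn u (Set.Icc 0 x₀) := hC2.continuousOn
  have hud : ∀ y ∈ Set.Ioo (0:ℝ) x₀, DifferentiableAt ℝ u y := by
    intro y hy
    have := hC2.differentiableOn (by norm_num) y ⟨le_of_lt hy.1, le_of_lt hy.2⟩
    exact this.differentiableAt (Icc_mem_nhds hy.1 hy.2)
  set v : ℝ → ℝ := fun y => u y - (h - h * (y ^ 2 / 2 + 1 / 12 * (1 / 2 + h ^ 2) * y ^ 4
        + h ^ 2 / 36 * y ^ 6 + h ^ 2 / 288 * y ^ 8 + h ^ 2 / 6480 * y ^ 10)) with hv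
  have hvD : ∀ y ∈ Set.Ioo (0:ℝ) x₀, HasDerivAt v
      (deriv u y - (-(h*y) - h*(1/2+h^2)/3*y^3 - h^3/6*y^5 - h^3/36*y^7 - h^3/648*y^9)) y :=
    fun y hy => ((hud y hy).hasDerivAt).sub (barrier_poly_deriv h y)
  have hcont : ContinuousOn v (Set.Icc 0 x₀) := by
    exact huc.sub (fun y _ => (barrier_poly_deriv h y).differentiableAt.continuousAt.continuousWithinAt)
  have hdiff : DifferentiableOn ℝ v (interior (Set.Icc 0 x₀)) := by
    rw [hint]
    exact fun y hy => ((hvD y hy).differentiableAt).differentiableWithinAt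
  have hder : ∀ y ∈ interior (Set.Icc 0 x₀), deriv v y ≤ 0 := by
    rw [hint]
    intro y hy
    rw [(hvD y hy).deriv]
    have := key y ⟨le_of_lt hy.1, le_of_lt hy.2⟩
    linarith
  have hanti := antitoneOn_of_deriv_nonpos (convex_Icc 0 x₀) hcont hdiff hder
  intro x hx
  have h0I : (0:ℝ) ∈ Set.Icc (0:ℝ) x₀ := ⟨le_refl 0, le_of_lt hx₀⟩
  have := hanti h0I hx hx.1
  have hv0 : v 0 = 0 := by simp [hv, hu0]
  rw [hv0] at this
  simp only [hv] at this
  linarith
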